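/- With the same Hamiltonian system, define H₄ = −∑_j c_j ω_j² (−ω_j ψ₁ⱼ + τ_j). Then d/dt H₃(z(t)) = H₄(z(t)), and d/dt H₄(z(t)) = ∑_j c_j ω_j³ (ω_j ψ₂ⱼ + 2 s_j) − u(t) ∑_j c_j² ω_j². In particular, the control u first appears with nonzero coefficient in the fourth derivative of H₁ (provided ∑ c_j² ω_j² > 0). -/

import Mathlib

/-- For the same Hamiltonian system, with
`H₃ = −∑ c_j ω_j (ω_j ψ₂ⱼ + s_j)` and `H₄ = −∑ c_j ω_j² (−ω_j ψ₁ⱼ + τ_j)`, assuming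
locally uniform absolute convergence of the differentiated series, one has
`d/dt H₃(z(t)) = H₄(z(t))` and
`d/dt H₄(z(t)) = ∑ c_j ω_j³ (ω_j ψ₂ⱼ + 2 s_j) − u(t) ∑ c_j² ω_j²`:
the control `u` first appears (with coefficient `−∑ c_j² ω_j² ≠ 0` when
`∑ c_j² ω_j² > 0`) in the fourth derivative of `H₁`. -/
theorem stmt_9 (ω c : ℕ → ℝ) (hω : ∀ j, 0 < ω j)
    (ψ₁ ψ₂ s τ : ℕ → ℝ → ℝ) (u : ℝ → ℝ)
    (hψ₁ : ∀ j t, HasDerivAt (ψ₁ j) (ω j * ψ₂ j t + s j t) t)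
    (hψ₂ : ∀ j t, HasDerivAt (ψ₂ j) (-(ω j) * ψ₁ j t) t)
    (hs : ∀ j t, HasDerivAt (s j) (ω j * τ j t) t)
    (hτ : ∀ j t, HasDerivAt (τ j) (-(ω j) * s j t + c j * u t) t)
    (hu : ∀ t, |u t| ≤ 1)
    (hH₃ : ∀ t, Summable (fun j => c j * ω j * (ω j * ψ₂ j t + s j t)))
    (hH₄ : ∀ t, Summable (fun j => c j * ω j ^ 2 * (-(ω j) * ψ₁ j t + τ j t)))
    (hdom₃ : ∀ K : ℝ, 0 < K → ∃ g : ℕ → ℝ, Summable g ∧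
      ∀ j, ∀ t : ℝ, |t| ≤ K →
        |c j| * ω j ^ 2 * (ω j * |ψ₁ j t| + |τ j t|) ≤ g j)
    (hdom₄ : ∀ K : ℝ, 0 < K → ∃ g : ℕ → ℝ, Summable g ∧
      ∀ j, ∀ t : ℝ, |t| ≤ K →
        |c j| * ω j ^ 3 * (ω j * |ψ₂ j t| + 2 * |s j t|) + c j ^ 2 * ω j ^ 2 ≤ g j) :
    (∀ t : ℝ, HasDerivAt (fun r => -∑' j : ℕ, c j * ω j * (ω j * ψ₂ j r + s j r))
        (-∑' j : ℕ, c j * ω j ^ 2 * (-(ω j) * ψ₁ j t + τ j t)) t) ∧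
    (∀ t : ℝ, HasDerivAt
        (fun r => -∑' j : ℕ, c j * ω j ^ 2 * (-(ω j) * ψ₁ j r + τ j r))
        ((∑' j : ℕ, c j * ω j ^ 3 * (ω j * ψ₂ j t + 2 * s j t))
          - u t * ∑' j : ℕ, c j ^ 2 * ω j ^ 2) t) := by
  have hωnn : ∀ j, 0 ≤ ω j := fun j => (hω j).le
  constructor
  · intro t
    set K : ℝ := |t| + 1 with hK
    have hKpos : 0 < K := by positivity
    obtain ⟨g, hg, hgb⟩ := hdom₃ K hKpos
    have hmem : t ∈ Set.Ioo (-K) K := by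
      constructor <;> [nlinarith [abs_nonneg t, neg_abs_le t]; nlinarith [le_abs_self t]]
    have hder : ∀ j (y : ℝ), y ∈ Set.Ioo (-K) K →
        HasDerivAt (fun r => c j * ω j * (ω j * ψ₂ j r + s j r))
          (c j * ω j ^ 2 * (-(ω j) * ψ₁ j y + τ j y)) y := by
      intro j y _
      have := (((hψ₂ j y).const_mul (ω j)).add (hs j y)).const_mul (c j * ω j)
      exact this.congr_deriv (by ring)
    have hbound : ∀ j (y : ℝ), y ∈ Set.Ioo (-K) K →
        ‖c j * ω j ^ 2 * (-(ω j) * ψ₁ j y + τ j y)‖ ≤ g j := by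
      intro j y hy
      have hyK : |y| ≤ K := by
        rw [abs_le]; exact ⟨hy.1.le, hy.2.le⟩
      refine le_trans ?_ (hgb j y hyK)
      rw [Real.norm_eq_abs, abs_mul, abs_mul]
      have h1 : |(ω j) ^ 2| = ω j ^ 2 := abs_of_nonneg (by positivity)
      rw [h1]
      gcongr
      calc |(-(ω j)) * ψ₁ j y + τ j y| ≤ |(-(ω j)) * ψ₁ j y| + |τ j y| := abs_add_le _ _
        _ = ω j * |ψ₁ j y| + |τ j y| := by
            rw [abs_mul, abs_neg, abs_of_nonneg (hωnn j)]
    have := hasDerivAt_tsum_of_isPreconnected hg isOpen_Ioo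
      (isPreconnected_Ioo) hder hbound hmem (hH₃ t) hmem
    exact this.neg
  · intro t
    set K : ℝ := |t| + 1 with hK
    have hKpos : 0 < K := by positivity
    obtain ⟨g, hg, hgb⟩ := hdom₄ K hKpos
    have hmem : t ∈ Set.Ioo (-K) K := by
      constructor <;> [nlinarith [abs_nonneg t, neg_abs_le t]; nlinarith [le_abs_self t]]
    have hder : ∀ j (y : ℝ), y ∈ Set.Ioo (-K) K →
        HasDerivAt (fun r => c j * ω j ^ 2 * (-(ω j) * ψ₁ j r + τ j r))
          (-(c j * ω j ^ 3 * (ω j * ψ₂ j y + 2 * s j y)) + c j ^ 2 * ω j ^ 2 * u y) y := by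
      intro j y _
      have := (((hψ₁ j y).const_mul (-(ω j))).add (hτ j y)).const_mul (c j * ω j ^ 2)
      exact this.congr_deriv (by ring)
    have hbound : ∀ j (y : ℝ), y ∈ Set.Ioo (-K) K →
        ‖-(c j * ω j ^ 3 * (ω j * ψ₂ j y + 2 * s j y)) + c j ^ 2 * ω j ^ 2 * u y‖ ≤ g j := by
      intro j y hy
      have hyK : |y| ≤ K := by
        rw [abs_le]; exact ⟨hy.1.le, hy.2.le⟩
      refine le_trans ?_ (hgb j y hyK)
      rw [Real.norm_eq_abs]
      calc |-(c j * ω j ^ 3 * (ω j * ψ₂ j y + 2 * s j y)) + c j ^ 2 * ω j ^ 2 * u y|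
          ≤ |-(c j * ω j ^ 3 * (ω j * ψ₂ j y + 2 * s j y))| + |c j ^ 2 * ω j ^ 2 * u y| :=
            abs_add_le _ _
        _ ≤ |c j| * ω j ^ 3 * (ω j * |ψ₂ j y| + 2 * |s j y|) + c j ^ 2 * ω j ^ 2 := by
            refine add_le_add ?_ ?_
            · rw [abs_neg, abs_mul, abs_mul,
                abs_of_nonneg (pow_nonneg (hωnn j) 3)]
              refine mul_le_mul_of_nonneg_left ?_
                (mul_nonneg (abs_nonneg _) (pow_nonneg (hωnn j) 3))
              calc |ω j * ψ₂ j y + 2 * s j y| ≤ |ω j * ψ₂ j y| + |2 * s j y| := abs_add_le _ _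
                _ = ω j * |ψ₂ j y| + 2 * |s j y| := by
                    rw [abs_mul, abs_mul, abs_of_nonneg (hωnn j), abs_of_nonneg (by norm_num : (0:ℝ) ≤ 2)]
            · calc |c j ^ 2 * ω j ^ 2 * u y| = c j ^ 2 * ω j ^ 2 * |u y| := by
                    rw [abs_mul, abs_of_nonneg (by positivity : (0:ℝ) ≤ c j ^ 2 * ω j ^ 2)]
                _ ≤ c j ^ 2 * ω j ^ 2 * 1 := mul_le_mul_of_nonneg_left (hu y) (by positivity)
                _ = c j ^ 2 * ω j ^ 2 := mul_one _
    have hDA := hasDerivAt_tsum_of_isPreconnected hg isOpen_Ioo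
      (isPreconnected_Ioo) hder hbound hmem (hH₄ t) hmem
    -- now rewrite the derivative value
    have hAsumm : Summable (fun j => c j * ω j ^ 3 * (ω j * ψ₂ j t + 2 * s j t)) := by
      apply Summable.of_norm_bounded hg
      intro j
      rw [Real.norm_eq_abs]
      refine le_trans ?_ (hgb j t (abs_le.mpr ⟨hmem.1.le, hmem.2.le⟩))
      have : |c j * ω j ^ 3 * (ω j * ψ₂ j t + 2 * s j t)| ≤
          |c j| * ω j ^ 3 * (ω j * |ψ₂ j t| + 2 * |s j t|) := by
        rw [abs_mul, abs_mul, abs_of_nonneg (pow_nonneg (hωnn j) 3)]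
        refine mul_le_mul_of_nonneg_left ?_
          (mul_nonneg (abs_nonneg _) (pow_nonneg (hωnn j) 3))
        calc |ω j * ψ₂ j t + 2 * s j t| ≤ |ω j * ψ₂ j t| + |2 * s j t| := abs_add_le _ _
          _ = ω j * |ψ₂ j t| + 2 * |s j t| := by
              rw [abs_mul, abs_mul, abs_of_nonneg (hωnn j), abs_of_nonneg (by norm_num : (0:ℝ) ≤ 2)]
      nlinarith [sq_nonneg (c j), sq_nonneg (ω j), mul_nonneg (sq_nonneg (c j)) (sq_nonneg (ω j))]
    have hBsumm : Summable (fun j => c j ^ 2 * ω j ^ 2) := by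
      apply Summable.of_nonneg_of_le (fun j => by positivity)
        (fun j => ?_) hg
      refine le_trans ?_ (hgb j t (abs_le.mpr ⟨hmem.1.le, hmem.2.le⟩))
      nlinarith [abs_nonneg (c j), abs_nonneg (ψ₂ j t), abs_nonneg (s j t),
        mul_nonneg (abs_nonneg (c j)) (pow_nonneg (hωnn j) 3),
        mul_nonneg (hωnn j) (abs_nonneg (ψ₂ j t)),
        mul_nonneg (mul_nonneg (abs_nonneg (c j)) (pow_nonneg (hωnn j) 3))
          (add_nonneg (mul_nonneg (hωnn j) (abs_nonneg (ψ₂ j t)))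
            (mul_nonneg (by norm_num : (0:ℝ) ≤ 2) (abs_nonneg (s j t))))]
    have hval : (∑' j, (-(c j * ω j ^ 3 * (ω j * ψ₂ j t + 2 * s j t)) + c j ^ 2 * ω j ^ 2 * u t))
        = -((∑' j, c j * ω j ^ 3 * (ω j * ψ₂ j t + 2 * s j t)) - u t * ∑' j, c j ^ 2 * ω j ^ 2) := by
      rw [Summable.tsum_add hAsumm.neg (hBsumm.mul_right (u t)), tsum_neg, tsum_mul_right]
      ring
    rw [hval] at hDA
    simpa only [neg_neg, Pi.neg_def] using hDA.neg
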